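/- Let α ≥ 0, β > 0, r > 1, R > 0, and let χ* be defined as in the context. Suppose 0 < χ < χ* and λ > 1 satisfies λχ < χ*. For M > 0 define θ₁(τ) = (1+τM)(R⁻¹ − λχτ) and θ₂(τ) = (1+τM)(η_M⁻¹ − λχτ) for τ ≥ 0. Then there exists M > 0 such that θ₁'(0) = M/R − λχ > 0 and θ₂'(0) = M/η_M − λχ > 0; consequently there exists τ* > 0 such that θ₁(t) ≥ θ₁(0) = R⁻¹ and θ₂(t) ≥ θ₂(0) = η_M⁻¹ for all t ∈ (0, τ*). -/

import Mathlib

open Real Set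

/-- `η_M = ((α+M)/β)^{1/(r-1)}`. -/
noncomputable def etaM (α β r M : ℝ) : ℝ := ((α + M) / β) ^ (1 / (r - 1))

/-- The threshold `χ*` from the paper, as an extended real number. -/
noncomputable def chiStar (α β r R : ℝ) : EReal :=
  if 2 < r then ⊤
  else if r = 2 then (β : EReal)
  else if (α / (β * (2 - r))) ^ (1 / (r - 1)) < R then
    ((R⁻¹ * (β * R ^ (r - 1) - α) : ℝ) : EReal)
  else
    ((α ^ ((2 - r) / (1 - r)) * β ^ (1 / (r - 1)) * (2 - r) ^ ((2 - r) / (r - 1)) * (r - 1) : ℝ) :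
      EReal)

/-- Main workhorse: if we can find `η > 0` with `M := β η^{r-1} - α` dominating
`λχ R` and `λχ η`, the conclusion follows with `etaM α β r M = η`. -/
lemma aux_main (α β r R χ lam η : ℝ)
    (hβ : 0 < β) (hr : 1 < r) (hR : 0 < R)
    (hχ : 0 < χ) (hlam : 1 < lam) (hη : 0 < η)
    (h1 : lam * χ * R < β * η ^ (r - 1) - α)
    (h2 : lam * χ * η < β * η ^ (r - 1) - α) :
    ∃ M : ℝ, 0 < M ∧
      HasDerivAt (fun τ : ℝ => (1 + τ * M) * (R⁻¹ - lam * χ * τ)) (M / R - lam * χ) 0 ∧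
      HasDerivAt (fun τ : ℝ => (1 + τ * M) * ((etaM α β r M)⁻¹ - lam * χ * τ))
        (M / etaM α β r M - lam * χ) 0 ∧
      0 < M / R - lam * χ ∧ 0 < M / etaM α β r M - lam * χ ∧
      ∃ τs : ℝ, 0 < τs ∧ ∀ t ∈ Set.Ioo (0 : ℝ) τs,
        R⁻¹ ≤ (1 + t * M) * (R⁻¹ - lam * χ * t) ∧
        (etaM α β r M)⁻¹ ≤ (1 + t * M) * ((etaM α β r M)⁻¹ - lam * χ * t) := by
  have hL : 0 < lam * χ := mul_pos (lt_trans one_pos hlam) hχ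
  set L := lam * χ with hLdef
  set M := β * η ^ (r - 1) - α with hMdef
  have hMpos : 0 < M := lt_trans (mul_pos hL hη) h2
  have hEta : etaM α β r M = η := by
    unfold etaM
    have hs : α + M = β * η ^ (r - 1) := by rw [hMdef]; ring
    rw [hs, mul_div_cancel_left₀ _ (ne_of_gt hβ), one_div]
    exact Real.rpow_rpow_inv hη.le (ne_of_gt (by linarith : (0:ℝ) < r - 1))
  have hd : ∀ c : ℝ, HasDerivAt (fun τ : ℝ => (1 + τ * M) * (c - L * τ)) (M * c - L) 0 := by
    intro c
    have d1 : HasDerivAt (fun τ : ℝ => 1 + τ * M) M 0 := by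
      simpa using ((hasDerivAt_id (0 : ℝ)).mul_const M).const_add 1
    have d2 : HasDerivAt (fun τ : ℝ => c - L * τ) (-L) 0 := by
      simpa using ((hasDerivAt_id (0 : ℝ)).const_mul L).const_sub c
    have := d1.mul d2
    exact this.congr_deriv (by ring)
  have hdR : 0 < M / R - L := by
    have : L < M / R := (lt_div_iff₀ hR).mpr h1
    linarith
  have hdη : 0 < M / η - L := by
    have : L < M / η := (lt_div_iff₀ hη).mpr h2
    linarith
  refine ⟨M, hMpos, ?_, ?_, hdR, by rw [hEta]; exact hdη, ?_⟩
  · have := hd R⁻¹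
    rw [div_eq_mul_inv]
    exact this
  · rw [hEta]
    have := hd η⁻¹
    rw [div_eq_mul_inv]
    exact this
  · refine ⟨min ((M / R - L) / (L * M)) ((M / η - L) / (L * M)), ?_, ?_⟩
    · exact lt_min (div_pos hdR (mul_pos hL hMpos)) (div_pos hdη (mul_pos hL hMpos))
    · intro t ht
      have ht0 : 0 < t := ht.1
      have htR : t * (L * M) < M / R - L := by
        have : t < (M / R - L) / (L * M) := lt_of_lt_of_le ht.2 (min_le_left _ _)
        exact (lt_div_iff₀ (mul_pos hL hMpos)).mp this
      have htη : t * (L * M) < M / η - L := by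
        have : t < (M / η - L) / (L * M) := lt_of_lt_of_le ht.2 (min_le_right _ _)
        exact (lt_div_iff₀ (mul_pos hL hMpos)).mp this
      rw [div_eq_mul_inv] at htR htη
      constructor
      · nlinarith [mul_pos ht0 (sub_pos.mpr htR)]
      · rw [hEta]
        nlinarith [mul_pos ht0 (sub_pos.mpr htη)]

theorem stmt0 (α β r R χ lam : ℝ)
    (hα : 0 ≤ α) (hβ : 0 < β) (hr : 1 < r) (hR : 0 < R)
    (hχ : 0 < χ) (hχs : (χ : EReal) < chiStar α β r R)
    (hlam : 1 < lam) (hlamχ : ((lam * χ : ℝ) : EReal) < chiStar α β r R) :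
    ∃ M : ℝ, 0 < M ∧
      HasDerivAt (fun τ : ℝ => (1 + τ * M) * (R⁻¹ - lam * χ * τ)) (M / R - lam * χ) 0 ∧
      HasDerivAt (fun τ : ℝ => (1 + τ * M) * ((etaM α β r M)⁻¹ - lam * χ * τ))
        (M / etaM α β r M - lam * χ) 0 ∧
      0 < M / R - lam * χ ∧ 0 < M / etaM α β r M - lam * χ ∧
      ∃ τs : ℝ, 0 < τs ∧ ∀ t ∈ Set.Ioo (0 : ℝ) τs,
        R⁻¹ ≤ (1 + t * M) * (R⁻¹ - lam * χ * t) ∧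
        (etaM α β r M)⁻¹ ≤ (1 + t * M) * ((etaM α β r M)⁻¹ - lam * χ * t) := by
  have hL : 0 < lam * χ := mul_pos (lt_trans one_pos hlam) hχ
  set L := lam * χ with hLdef
  by_cases h2r : 2 < r
  · -- r > 2 : choose a large η
    set C := (α + L * R + L) / β + 1 with hCdef
    have hC1 : 1 ≤ C := by
      rw [hCdef]
      have : 0 ≤ (α + L * R + L) / β := by positivity
      linarith
    have hC0 : 0 < C := by linarith
    set η := C ^ (1 / (r - 2)) with hηdef
    have hη : 0 < η := Real.rpow_pos_of_pos hC0 _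
    have hη1 : 1 ≤ η := Real.one_le_rpow hC1 (div_nonneg zero_le_one (by linarith))
    have hpow : η ^ (r - 2) = C := by
      rw [hηdef, one_div]
      exact Real.rpow_inv_rpow hC0.le (ne_of_gt (by linarith : (0:ℝ) < r - 2))
    have hpow2 : η ^ (r - 1) = C * η := by
      have e : r - 1 = (r - 2) + 1 := by ring
      rw [e, Real.rpow_add hη, Real.rpow_one, hpow]
    have hβC : β * C = α + L * R + L + β := by
      rw [hCdef]
      field_simp
    have hval : β * η ^ (r - 1) = (α + L * R + L + β) * η := by
      rw [hpow2, ← hβC]; ring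
    have key : α + L * R + L + β ≤ (α + L * R + L + β) * η :=
      le_mul_of_one_le_right (by positivity) hη1
    have key2 : α + L * R + β ≤ (α + L * R + β) * η :=
      le_mul_of_one_le_right (by positivity) hη1
    refine aux_main α β r R χ lam η hβ hr hR hχ hlam hη ?_ ?_
    · rw [hval]; nlinarith
    · rw [hval]; nlinarith
  · by_cases hr2 : r = 2
    · -- r = 2
      subst hr2
      rw [chiStar, if_neg h2r, if_pos rfl, EReal.coe_lt_coe_iff] at hlamχ
      have hβL : 0 < β - L := by linarith
      set η := max ((L * R + α + 1) / β) ((α + 1) / (β - L)) with hηdef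
      have hη : 0 < η :=
        lt_of_lt_of_le (by positivity : (0:ℝ) < (α + 1) / (β - L)) (le_max_right _ _)
      have hpow : η ^ ((2:ℝ) - 1) = η := by norm_num
      have k1 : L * R + α + 1 ≤ β * η := by
        have := le_max_left ((L * R + α + 1) / β) ((α + 1) / (β - L))
        rw [div_le_iff₀ hβ] at this
        linarith [this]
      have k2 : α + 1 ≤ (β - L) * η := by
        have := le_max_right ((L * R + α + 1) / β) ((α + 1) / (β - L))
        rw [div_le_iff₀ hβL] at this
        linarith [this]
      refine aux_main α β 2 R χ lam η hβ hr hR hχ hlam hη ?_ ?_ <;> rw [hpow] <;> nlinarith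
    · have hrlt : r < 2 := lt_of_le_of_ne (not_lt.mp h2r) hr2
      by_cases hbig : (α / (β * (2 - r))) ^ (1 / (r - 1)) < R
      · -- large R case: η = R
        rw [chiStar, if_neg h2r, if_neg hr2, if_pos hbig, EReal.coe_lt_coe_iff] at hlamχ
        have h1 : L * R < β * R ^ (r - 1) - α := by
          rw [inv_mul_eq_div] at hlamχ
          exact (lt_div_iff₀ hR).mp hlamχ
        exact aux_main α β r R χ lam R hβ hr hR hχ hlam hR h1 h1
      · -- small R case
        rw [chiStar, if_neg h2r, if_neg hr2, if_neg hbig, EReal.coe_lt_coe_iff] at hlamχ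
        have hRle : R ≤ (α / (β * (2 - r))) ^ (1 / (r - 1)) := not_lt.mp hbig
        have hc : (0:ℝ) < 2 - r := by linarith
        have hα0 : 0 < α := by
          rcases (hα.eq_or_lt.imp_left Eq.symm) with h | h
          · exfalso
            apply hbig
            rw [h, zero_div, Real.zero_rpow (one_div_ne_zero (ne_of_gt (by linarith : (0:ℝ) < r - 1)))]
            exact hR
          · exact h
        have hx : (0:ℝ) < α / (β * (2 - r)) := by positivity
        set η := (α / (β * (2 - r))) ^ (1 / (r - 1)) with hηdef
        have hη : 0 < η := Real.rpow_pos_of_pos hx _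
        have hpow : η ^ (r - 1) = α / (β * (2 - r)) := by
          rw [hηdef, one_div]
          exact Real.rpow_inv_rpow hx.le (ne_of_gt (by linarith : (0:ℝ) < r - 1))
        have hMval : β * η ^ (r - 1) - α = α * (r - 1) / (2 - r) := by
          rw [hpow]
          field_simp
          ring
        have hs : 0 < α ^ (1 / (r - 1)) := Real.rpow_pos_of_pos hα0 _
        have hbs : 0 < β ^ (1 / (r - 1)) := Real.rpow_pos_of_pos hβ _
        have hcs : 0 < (2 - r) ^ (1 / (r - 1)) := Real.rpow_pos_of_pos hc _
        have hK : α ^ ((2 - r) / (1 - r)) * β ^ (1 / (r - 1)) * (2 - r) ^ ((2 - r) / (r - 1))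
            * (r - 1) = (α * (r - 1) / (2 - r)) / η := by
          have hne : r - 1 ≠ 0 := ne_of_gt (by linarith)
          have hne2 : 1 - r ≠ 0 := ne_of_lt (by linarith)
          have e1 : (2 - r) / (1 - r) = 1 - 1 / (r - 1) := by
            field_simp
            ring
          have e2 : (2 - r) / (r - 1) = 1 / (r - 1) - 1 := by
            field_simp
            ring
          rw [e1, e2, Real.rpow_sub hα0, Real.rpow_sub hc, Real.rpow_one, Real.rpow_one,
            hηdef, Real.div_rpow hα0.le (by positivity), Real.mul_rpow hβ.le hc.le]
          field_simp
        rw [hK] at hlamχ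
        have h2 : L * η < β * η ^ (r - 1) - α := by
          rw [hMval]
          exact (lt_div_iff₀ hη).mp hlamχ
        have h1 : L * R < β * η ^ (r - 1) - α := by
          have : L * R ≤ L * η := by
            apply mul_le_mul_of_nonneg_left _ hL.le
            rw [hηdef] at hRle ⊢
            exact hRle
          linarith
        exact aux_main α β r R χ lam η hβ hr hR hχ hlam hη h1 h2
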